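/- Let ℓ : X → ℝ be convex, λ-strongly convex, and L-smooth on the closed convex set X, with unique minimizer x* over X. Let 0 < η ≤ 1/L and define x⁺ = Π_X[x − η∇ℓ(x)]. Then ‖x⁺ − x*‖² ≤ (1 − λ/(λ + 1/η)) ‖x − x*‖². -/

import Mathlib

set_option maxHeartbeats 1000000


/-- one projected gradient step on a strongly convex and smooth function
contracts the squared distance to the minimizer. -/
theorem projected_gradient_step_contraction
    {n : ℕ} (X : Set (EuclideanSpace ℝ (Fin n)))
    (hXne : X.Nonempty) (hXcl : IsClosed X) (hXconv : Convex ℝ X)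
    (projX : EuclideanSpace ℝ (Fin n) → EuclideanSpace ℝ (Fin n))
    (hproj : ∀ z, projX z ∈ X ∧ ∀ c ∈ X, ‖z - projX z‖ ≤ ‖z - c‖)
    (ℓ : EuclideanSpace ℝ (Fin n) → ℝ)
    (g : EuclideanSpace ℝ (Fin n) → EuclideanSpace ℝ (Fin n))
    (hdiff : ∀ x ∈ X, HasGradientAt ℓ (g x) x)
    (lam L : ℝ) (hlam : 0 < lam) (hL : 0 < L)
    (hsc : ∀ x ∈ X, ∀ y ∈ X,
      ℓ y ≥ ℓ x + (inner ℝ (g x) (y - x) : ℝ) + lam / 2 * ‖y - x‖ ^ 2)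
    (hsmooth : ∀ x ∈ X, ∀ y ∈ X,
      ℓ y ≤ ℓ x + (inner ℝ (g x) (y - x) : ℝ) + L / 2 * ‖y - x‖ ^ 2)
    (xstar : EuclideanSpace ℝ (Fin n)) (hxstar : xstar ∈ X)
    (hmin : ∀ y ∈ X, ℓ xstar ≤ ℓ y)
    (huniq : ∀ y ∈ X, (∀ z ∈ X, ℓ y ≤ ℓ z) → y = xstar)
    (η : ℝ) (hη0 : 0 < η) (hηL : η ≤ 1 / L)
    (x : EuclideanSpace ℝ (Fin n)) (hx : x ∈ X) :
    ‖projX (x - η • g x) - xstar‖ ^ 2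
      ≤ (1 - lam / (lam + 1 / η)) * ‖x - xstar‖ ^ 2 := by
  -- projection variational inequality
  have hVIall : ∀ z, ∀ c ∈ X, (inner ℝ (z - projX z) (c - projX z) : ℝ) ≤ 0 := by
    intro z c hc
    set q := projX z with hq
    have hqX : q ∈ X := (hproj z).1
    by_contra hpos
    push_neg at hpos
    set I : ℝ := inner ℝ (z - q) (c - q) with hI
    have hcq : (0:ℝ) < ‖c - q‖ ^ 2 := by
      rcases eq_or_ne c q with h | h
      · exfalso
        rw [hI, h, sub_self, inner_zero_right] at hpos
        exact lt_irrefl 0 hpos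
      · exact pow_pos (norm_sub_pos_iff.mpr h) 2
    set t : ℝ := min 1 (I / ‖c - q‖ ^ 2) with htdef
    have ht0 : 0 < t := lt_min one_pos (div_pos hpos hcq)
    have ht1 : t ≤ 1 := min_le_left _ _
    have hmem : q + t • (c - q) ∈ X := by
      have h2 := hXconv hqX hc (by linarith : (0:ℝ) ≤ 1 - t) ht0.le (by ring)
      have e : (1 - t) • q + t • c = q + t • (c - q) := by module
      rwa [e] at h2
    have hle := (hproj z).2 _ hmem
    have hsq : ‖z - q‖ ^ 2 ≤ ‖z - (q + t • (c - q))‖ ^ 2 :=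
      pow_le_pow_left₀ (norm_nonneg _) hle 2
    have e : z - (q + t • (c - q)) = (z - q) - t • (c - q) := by module
    have hexp : ‖(z - q) - t • (c - q)‖ ^ 2
        = ‖z - q‖ ^ 2 - 2 * (t * I) + t ^ 2 * ‖c - q‖ ^ 2 := by
      rw [norm_sub_sq_real, real_inner_smul_right, norm_smul, Real.norm_eq_abs,
        abs_of_pos ht0, mul_pow, hI]
    rw [e, hexp] at hsq
    have htI : t * ‖c - q‖ ^ 2 ≤ I := by
      have hm := min_le_right 1 (I / ‖c - q‖ ^ 2)
      calc t * ‖c - q‖ ^ 2 ≤ (I / ‖c - q‖ ^ 2) * ‖c - q‖ ^ 2 :=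
            mul_le_mul_of_nonneg_right hm hcq.le
        _ = I := div_mul_cancel₀ _ (ne_of_gt hcq)
      
    nlinarith [mul_pos ht0 hpos, mul_le_mul_of_nonneg_left htI ht0.le]
  set p := projX (x - η • g x) with hp_def
  have hpX : p ∈ X := (hproj _).1
  have hVI : (inner ℝ ((x - η • g x) - p) (xstar - p) : ℝ) ≤ 0 := hVIall _ _ hxstar
  have e1 : (x - η • g x) - p = (x - p) - η • g x := by module
  rw [e1, inner_sub_left, real_inner_smul_left] at hVI
  -- hVI : ⟪x - p, xstar - p⟫ - η * ⟪g x, xstar - p⟫ ≤ 0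
  have hA := hsmooth x hx p hpX
  have hB := hsc x hx xstar hxstar
  have hC := hmin p hpX
  have e2 : (inner ℝ (g x) (xstar - x) : ℝ) - (inner ℝ (g x) (p - x) : ℝ)
      = (inner ℝ (g x) (xstar - p) : ℝ) := by
    rw [← inner_sub_right]; congr 1; module
  have e3 : ‖x - xstar‖ ^ 2
      = ‖x - p‖ ^ 2 - 2 * (inner ℝ (x - p) (xstar - p) : ℝ) + ‖xstar - p‖ ^ 2 := by
    have : x - xstar = (x - p) - (xstar - p) := by module
    rw [this, norm_sub_sq_real]
  have hηL1 : η * L ≤ 1 := by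
    rw [le_div_iff₀ hL] at hηL; linarith
  have e4 : ‖p - xstar‖ = ‖xstar - p‖ := norm_sub_rev _ _
  have hnx : (0:ℝ) ≤ ‖x - xstar‖ ^ 2 := sq_nonneg _
  have hnp : (0:ℝ) ≤ ‖x - p‖ ^ 2 := sq_nonneg _
  -- combine function inequalities: ⟪g x, xstar - p⟫ + lam/2 ‖xstar-x‖² ≤ L/2 ‖p-x‖²
  have hfun : (inner ℝ (g x) (xstar - p) : ℝ) + lam / 2 * ‖xstar - x‖ ^ 2
      ≤ L / 2 * ‖p - x‖ ^ 2 := by linarith [e2 ▸ (by linarith : (inner ℝ (g x) (xstar - x) : ℝ) - (inner ℝ (g x) (p - x) : ℝ) + lam / 2 * ‖xstar - x‖ ^ 2 ≤ L / 2 * ‖p - x‖ ^ 2)]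
  have e5 : ‖xstar - x‖ = ‖x - xstar‖ := norm_sub_rev _ _
  have e6 : ‖p - x‖ = ‖x - p‖ := norm_sub_rev _ _
  rw [e5, e6] at hfun
  -- key contraction: ‖xstar - p‖² ≤ (1 - η lam) ‖x - xstar‖²
  have hkey : ‖xstar - p‖ ^ 2 ≤ (1 - η * lam) * ‖x - xstar‖ ^ 2 := by
    nlinarith [mul_le_mul_of_nonneg_left hfun (le_of_lt hη0)]
  have hcoef : 1 - lam / (lam + 1 / η) = 1 / (1 + lam * η) := by
    have h1 : lam + 1 / η > 0 := by positivity
    have h2 : 1 + lam * η > 0 := by positivity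
    field_simp
    ring
  rw [hcoef, e4]
  have h2 : (0:ℝ) < 1 + lam * η := by positivity
  rw [div_mul_eq_mul_div, le_div_iff₀ h2]
  nlinarith [mul_le_mul_of_nonneg_right hkey (le_of_lt h2), sq_nonneg (η * lam), mul_nonneg (mul_nonneg (le_of_lt hη0) (le_of_lt hlam)) (mul_nonneg (le_of_lt hη0) (le_of_lt hlam))]
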